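/- Let {ζ_r}_{r≥0} be a sequence of real numbers with 0 < ζ_r ≤ 1 for all r, and let p ≥ 1 be a real number. Then for all integers 0 ≤ s ≤ k, ∏_{r=s}^{k} (1 − ζ_r)^p ≤ 1 / (p · ∑_{r=s}^{k} ζ_r). -/

import Mathlib

open Finset

theorem bernoulli_product_bound (ζ : ℕ → ℝ) (hζpos : ∀ r, 0 < ζ r) (hζle : ∀ r, ζ r ≤ 1)
    (p : ℝ) (hp : 1 ≤ p) (s k : ℕ) (hsk : s ≤ k) :
    ∏ r ∈ Finset.Icc s k, (1 - ζ r) ^ p ≤ 1 / (p * ∑ r ∈ Finset.Icc s k, ζ r) := by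
  have hp0 : (0:ℝ) ≤ p := by linarith
  set S := ∑ r ∈ Finset.Icc s k, ζ r with hS
  have hSpos : 0 < S := Finset.sum_pos (fun r _ => hζpos r) ⟨s, by simp [hsk]⟩
  have hpS : 0 < p * S := mul_pos (by linarith) hSpos
  have h1 : ∏ r ∈ Finset.Icc s k, (1 - ζ r) ^ p
      ≤ ∏ r ∈ Finset.Icc s k, Real.exp (-(ζ r) * p) := by
    apply Finset.prod_le_prod
    · intro r _
      exact Real.rpow_nonneg (by linarith [hζle r]) p
    · intro r _
      have h2 : (1 - ζ r) ≤ Real.exp (-(ζ r)) := by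
        have := Real.add_one_le_exp (-(ζ r)); linarith
      calc (1 - ζ r) ^ p ≤ Real.exp (-(ζ r)) ^ p :=
            Real.rpow_le_rpow (by linarith [hζle r]) h2 hp0
        _ = Real.exp (-(ζ r) * p) := by
            rw [Real.rpow_def_of_pos (Real.exp_pos _), Real.log_exp]
  have h3 : ∏ r ∈ Finset.Icc s k, Real.exp (-(ζ r) * p) = Real.exp (-(p * S)) := by
    rw [← Real.exp_sum]
    congr 1
    rw [hS, Finset.mul_sum, ← Finset.sum_neg_distrib]
    exact Finset.sum_congr rfl fun x _ => by ring
  have h4 : Real.exp (-(p * S)) ≤ 1 / (p * S) := by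
    rw [Real.exp_neg, one_div]
    apply inv_anti₀ hpS
    have := Real.add_one_le_exp (p * S); linarith
  calc ∏ r ∈ Finset.Icc s k, (1 - ζ r) ^ p ≤ Real.exp (-(p * S)) := h1.trans_eq h3
    _ ≤ 1 / (p * S) := h4
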